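/- arXiv:2109.07975 — 6 statements merged into one kernel-verified Lean document; each statement's English description precedes it below -/
import Mathlib

section
/- If F : ℝ^m → ℝ^m is monotone and u* satisfies F(u*) = 0, then for the continuous-time golden ratio dynamics ż = -z + u, u̇ = -u + z - F(u), the Lyapunov function V(u,z) = ½‖z - u*‖² + ½‖u - u*‖² satisfies V̇(u,z) = -‖u - z‖² - ⟨u - u*, F(u) - F(u*)⟩ ≤ -‖u - z‖² along solutions. -/
open RealInnerProductSpace

lemma halfnorm_deriv {m : ℕ} (x : ℝ → EuclideanSpace ℝ (Fin m)) (c : EuclideanSpace ℝ (Fin m))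
    (x' : EuclideanSpace ℝ (Fin m)) (t : ℝ) (hx : HasDerivAt x x' t) :
    HasDerivAt (fun s => ‖x s - c‖ ^ 2 / 2) ⟪x', x t - c⟫ t := by
  have h : HasDerivAt (fun s => x s - c) x' t := hx.sub_const c
  have h2 : HasDerivAt (fun s => ⟪x s - c, x s - c⟫) (⟪x t - c, x'⟫ + ⟪x', x t - c⟫) t :=
    h.inner ℝ h
  have h3 : HasDerivAt (fun s => ⟪x s - c, x s - c⟫ / 2)
      ((⟪x t - c, x'⟫ + ⟪x', x t - c⟫) / 2) t := h2.div_const 2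
  have heq : (fun s => ⟪x s - c, x s - c⟫ / 2) = (fun s => ‖x s - c‖ ^ 2 / 2) := by
    funext s; rw [real_inner_self_eq_norm_sq]
  rw [heq] at h3
  convert h3 using 1
  rw [real_inner_comm (x t - c) x']
  ring

/-- Along the golden-ratio dynamics ż = -z + u, u̇ = -u + z - F(u), with F monotone
and F(u*) = 0, the Lyapunov function V(u,z) = ½‖z-u*‖² + ½‖u-u*‖² satisfies
V̇ = -‖u-z‖² - ⟨u-u*, F(u)-F(u*)⟩ ≤ -‖u-z‖². -/
theorem stmt0 {m : ℕ} (F : EuclideanSpace ℝ (Fin m) → EuclideanSpace ℝ (Fin m))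
    (hmono : ∀ u v, 0 ≤ ⟪u - v, F u - F v⟫)
    (ustar : EuclideanSpace ℝ (Fin m)) (hzero : F ustar = 0)
    (z u : ℝ → EuclideanSpace ℝ (Fin m))
    (hz : ∀ t, HasDerivAt z (-z t + u t) t)
    (hu : ∀ t, HasDerivAt u (-u t + z t - F (u t)) t) :
    ∀ t : ℝ,
      HasDerivAt (fun s => ‖z s - ustar‖ ^ 2 / 2 + ‖u s - ustar‖ ^ 2 / 2)
        (-‖u t - z t‖ ^ 2 - ⟪u t - ustar, F (u t) - F ustar⟫) t ∧
      -‖u t - z t‖ ^ 2 - ⟪u t - ustar, F (u t) - F ustar⟫ ≤ -‖u t - z t‖ ^ 2 := by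
  intro t
  constructor
  · have h1 := halfnorm_deriv z ustar (-z t + u t) t (hz t)
    have h2 := halfnorm_deriv u ustar (-u t + z t - F (u t)) t (hu t)
    have h := h1.add h2
    convert h using 1
    case e'_4 => rfl
    case e'_5 => rfl
    case e'_8 => rfl
    rw [hzero, sub_zero, ← real_inner_self_eq_norm_sq]
    simp only [inner_add_left, inner_sub_left, inner_neg_left, inner_sub_right,
      inner_add_right, inner_neg_right, real_inner_comm (u t) (z t), real_inner_comm (F (u t)) (u t), real_inner_comm (F (u t)) ustar]
    ring
  · have := hmono (u t) ustar
    linarith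
end

section
/- For a continuously differentiable monotone map F : ℝ^m → ℝ^m with nonempty zero set S = {u : F(u) = 0}, the set A = {(u,u) : u ∈ S} is globally asymptotically stable for the system ż = -z + u, u̇ = -u + z - F(u): every solution is bounded (V is nonincreasing) and converges to A. -/
set_option maxHeartbeats 1000000
open RealInnerProductSpace

lemma my_inner_algebra {E : Type*} [NormedAddCommGroup E] [InnerProductSpace ℝ E]
    (a b c f : E) :
    (⟪a - c, -a + b⟫ + ⟪-a + b, a - c⟫) + (⟪b - c, -b + a - f⟫ + ⟪-b + a - f, b - c⟫)
      = -2*⟪b - a, b - a⟫ - 2*⟪b - c, f⟫ := by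
  simp only [inner_sub_left, inner_sub_right, inner_add_left, inner_add_right,
    inner_neg_left, inner_neg_right]
  linarith [real_inner_comm a b, real_inner_comm a c, real_inner_comm b c,
    real_inner_comm f a, real_inner_comm f b, real_inner_comm f c]

lemma my_anti_of_deriv {φ φ' : ℝ → ℝ} (h : ∀ t, HasDerivAt φ (φ' t) t)
    (h0 : ∀ t, φ' t ≤ 0) : Antitone φ := by
  have H : AntitoneOn φ Set.univ := by
    apply antitoneOn_of_deriv_nonpos convex_univ
    · exact fun t _ => (h t).continuousAt.continuousWithinAt
    · intro x _; exact (h x).differentiableAt.differentiableWithinAt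
    · intro x _; rw [(h x).deriv]; exact h0 x
  intro a b hab; exact H (Set.mem_univ a) (Set.mem_univ b) hab

lemma my_decay {φ φ' : ℝ → ℝ} (h : ∀ t, HasDerivAt φ (φ' t) t) {a b K : ℝ}
    (hab : a ≤ b) (hK : ∀ t ∈ Set.Icc a b, φ' t ≤ -K) :
    φ b ≤ φ a - K * (b - a) := by
  have key : AntitoneOn (fun t => φ t + K * t) (Set.Icc a b) := by
    apply antitoneOn_of_deriv_nonpos (convex_Icc a b)
    · intro t _
      exact (((h t).add ((hasDerivAt_id t).const_mul K)).continuousAt).continuousWithinAt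
    · intro x _
      exact (((h x).add ((hasDerivAt_id x).const_mul K)).differentiableAt).differentiableWithinAt
    · intro x hx
      rw [interior_Icc] at hx
      have hd : HasDerivAt (fun t => φ t + K * t) (φ' x + K * 1) x :=
        (h x).add ((hasDerivAt_id x).const_mul K)
      rw [hd.deriv]
      have := hK x (Set.mem_Icc.2 ⟨le_of_lt hx.1, le_of_lt hx.2⟩)
      linarith
  have := key (Set.left_mem_Icc.2 hab) (Set.right_mem_Icc.2 hab) hab
  simp only at this
  linarith

lemma my_blowup {g : ℝ → ℝ} (hg : Continuous g) (hg0 : ∀ t, 0 ≤ g t)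
    {C c δ : ℝ} (hc : 0 < c) (hδ : 0 < δ)
    (hC : ∀ T, 0 ≤ T → (∫ t in (0:ℝ)..T, g t) ≤ C)
    (H : ∀ n : ℕ, ∃ s : ℝ, (n:ℝ) ≤ s ∧ ∀ t ∈ Set.Icc s (s + δ), c ≤ g t) :
    False := by
  have pick : ∀ x : ℝ, ∃ s : ℝ, x ≤ s ∧ ∀ t ∈ Set.Icc s (s + δ), c ≤ g t := by
    intro x
    obtain ⟨s, hs1, hs2⟩ := H ⌈x⌉₊
    exact ⟨s, le_trans (Nat.le_ceil x) hs1, hs2⟩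
  have intg : ∀ a b : ℝ, IntervalIntegrable g MeasureTheory.volume a b :=
    fun a b => hg.intervalIntegrable a b
  let s : ℕ → ℝ := fun k => Nat.rec (Classical.choose (pick 0))
    (fun _ sk => Classical.choose (pick (sk + δ))) k
  have hs0 : 0 ≤ s 0 := (Classical.choose_spec (pick 0)).1
  have hstep : ∀ k, s k + δ ≤ s (k + 1) := fun k =>
    (Classical.choose_spec (pick (s k + δ))).1
  have hlow : ∀ k, ∀ t ∈ Set.Icc (s k) (s k + δ), c ≤ g t := by
    intro k
    cases k with
    | zero => exact (Classical.choose_spec (pick 0)).2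
    | succ n => exact (Classical.choose_spec (pick (s n + δ))).2
  have hpos : ∀ k, 0 ≤ s k := by
    intro k
    induction k with
    | zero => exact hs0
    | succ n ih => have := hstep n; linarith
  have contrib : ∀ k, c * δ ≤ ∫ t in (s k)..(s k + δ), g t := by
    intro k
    have h := intervalIntegral.integral_mono_on (by linarith : s k ≤ s k + δ)
      intervalIntegrable_const (intg _ _) (hlow k)
    rwa [intervalIntegral.integral_const, smul_eq_mul,
      show s k + δ - s k = δ by ring, mul_comm] at h
  have key : ∀ k : ℕ, (k + 1 : ℝ) * (c * δ) ≤ ∫ t in (0:ℝ)..(s k + δ), g t := by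
    intro k
    induction k with
    | zero =>
      have split : (∫ t in (0:ℝ)..(s 0), g t) + (∫ t in (s 0)..(s 0 + δ), g t)
          = ∫ t in (0:ℝ)..(s 0 + δ), g t :=
        intervalIntegral.integral_add_adjacent_intervals (intg _ _) (intg _ _)
      have h1 : 0 ≤ ∫ t in (0:ℝ)..(s 0), g t :=
        intervalIntegral.integral_nonneg hs0 (fun t _ => hg0 t)
      have := contrib 0
      rw [← split]; push_cast; linarith
    | succ n ih =>
      have split1 : (∫ t in (0:ℝ)..(s n + δ), g t) + (∫ t in (s n + δ)..(s (n+1)), g t)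
          = ∫ t in (0:ℝ)..(s (n+1)), g t :=
        intervalIntegral.integral_add_adjacent_intervals (intg _ _) (intg _ _)
      have split2 : (∫ t in (0:ℝ)..(s (n+1)), g t) + (∫ t in (s (n+1))..(s (n+1) + δ), g t)
          = ∫ t in (0:ℝ)..(s (n+1) + δ), g t :=
        intervalIntegral.integral_add_adjacent_intervals (intg _ _) (intg _ _)
      have h1 : 0 ≤ ∫ t in (s n + δ)..(s (n+1)), g t :=
        intervalIntegral.integral_nonneg (hstep n) (fun t _ => hg0 t)
      have := contrib (n + 1)
      rw [← split2, ← split1]; push_cast at ih ⊢; linarith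
  obtain ⟨k, hk⟩ := exists_nat_gt (C / (c * δ))
  have hcd : 0 < c * δ := mul_pos hc hδ
  have h1 := key k
  have h2 := hC (s k + δ) (by have := hpos k; linarith)
  have : C < (k + 1 : ℝ) * (c * δ) := by
    rw [div_lt_iff₀ hcd] at hk
    nlinarith
  linarith

lemma my_case3 {E : Type*} [NormedAddCommGroup E] [InnerProductSpace ℝ E]
    {u z : ℝ → E} {F : E → E}
    (hu : ∀ t, HasDerivAt u (-u t + z t - F (u t)) t)
    (hz : ∀ t, HasDerivAt z (-z t + u t) t)
    {p : E} (hFp : F p ≠ 0)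
    {L : ℝ} (hL : 0 < L)
    (hFpL : ‖F p‖ ≤ L)
    (huL : ∀ a b : ℝ, 0 ≤ a → 0 ≤ b → ‖u b - u a‖ ≤ L * |b - a|)
    (hwL : ∀ a b : ℝ, 0 ≤ a → 0 ≤ b → ‖(u b - z b) - (u a - z a)‖ ≤ (2*L) * |b - a|)
    {r : ℝ} (hr : 0 < r)
    (hrF : ∀ y, ‖y - p‖ ≤ r → ‖F y - F p‖ ≤ ‖F p‖/4) :
    ∃ c δ : ℝ, 0 < c ∧ 0 < δ ∧ ∀ a : ℝ, 0 ≤ a →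
      ‖u a - p‖ ≤ ‖F p‖ * (r/(2*L))/16 → ‖z a - p‖ ≤ ‖F p‖ * (r/(2*L))/16 →
      ∃ s, a ≤ s ∧ ∀ t ∈ Set.Icc s (s + δ), c ≤ ‖u t - z t‖^2 := by
  have hε : (0:ℝ) < ‖F p‖ := norm_pos_iff.2 hFp
  obtain ⟨ε, hεdef⟩ : ∃ ε : ℝ, ε = ‖F p‖ := ⟨_, rfl⟩
  obtain ⟨s₀, hs₀def⟩ : ∃ s₀ : ℝ, s₀ = r/(2*L) := ⟨_, rfl⟩
  obtain ⟨ρ, hρdef⟩ : ∃ ρ : ℝ, ρ = min (ε/8) (ε*s₀/8) := ⟨_, rfl⟩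
  have hε' : 0 < ε := hεdef ▸ hε
  have hεL : ε ≤ L := hεdef ▸ hFpL
  have hs₀ : 0 < s₀ := by rw [hs₀def]; positivity
  have hLs₀ : L * s₀ = r/2 := by rw [hs₀def]; field_simp
  have hρ : 0 < ρ := by rw [hρdef]; positivity
  have hρ1 : ρ ≤ ε/8 := hρdef ▸ min_le_left _ _
  have hρ2 : ρ ≤ ε*s₀/8 := hρdef ▸ min_le_right _ _
  -- the unit vector in the direction of F p
  obtain ⟨e, hedef⟩ : ∃ e : E, e = ε⁻¹ • F p := ⟨_, rfl⟩
  have hnorme : ‖e‖ = 1 := by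
    rw [hedef, norm_smul, norm_inv, Real.norm_eq_abs, abs_of_pos hε', ← hεdef]
    field_simp
  have hinner_abs : ∀ x : E, |⟪x, e⟫| ≤ ‖x‖ := by
    intro x
    calc |⟪x, e⟫| ≤ ‖x‖ * ‖e‖ := abs_real_inner_le_norm x e
      _ = ‖x‖ := by rw [hnorme, mul_one]
  have hFpe : ⟪F p, e⟫ = ε := by
    rw [hedef, real_inner_smul_right, real_inner_self_eq_norm_sq, ← hεdef, sq]
    field_simp
  refine ⟨ρ^2/4, ρ/(4*L), by positivity, by positivity, ?_⟩
  intro a ha hua hza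
  have hua' : ‖u a - p‖ ≤ ε * s₀ / 16 := by
    rw [hεdef, hs₀def]; exact hua
  have hza' : ‖z a - p‖ ≤ ε * s₀ / 16 := by
    rw [hεdef, hs₀def]; exact hza
  -- step 1: somewhere in the window [a, a+s₀] the mismatch exceeds ρ
  have step1 : ∃ τ ∈ Set.Icc a (a + s₀), ρ ≤ ‖u τ - z τ‖ := by
    by_contra hno
    push_neg at hno
    have hball : ∀ t ∈ Set.Icc a (a + s₀), ‖u t - p‖ ≤ r := by
      intro t ht
      have ht0 : 0 ≤ t := le_trans ha ht.1
      have h1 := huL a t ha ht0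
      have h2 : |t - a| ≤ s₀ := by
        rw [abs_of_nonneg (by linarith [ht.1])]
        linarith [ht.2]
      have h3 : ‖u t - u a‖ ≤ L * s₀ := by
        calc ‖u t - u a‖ ≤ L * |t - a| := h1
          _ ≤ L * s₀ := by nlinarith
      have h4 : ‖u t - p‖ ≤ ‖u t - u a‖ + ‖u a - p‖ := by
        have := norm_add_le (u t - u a) (u a - p)
        simpa using this
      have hη : ε * s₀ / 16 ≤ r / 2 := by nlinarith
      linarith [hLs₀ ▸ h3]
    have hFe : ∀ t ∈ Set.Icc a (a + s₀), 3*ε/4 ≤ ⟪F (u t), e⟫ := by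
      intro t ht
      have h1 : ‖F (u t) - F p‖ ≤ ε/4 := by
        rw [hεdef]; exact hrF (u t) (hball t ht)
      have h2 : ⟪F (u t), e⟫ = ⟪F p, e⟫ + ⟪F (u t) - F p, e⟫ := by
        rw [inner_sub_left]; ring
      have h3 := hinner_abs (F (u t) - F p)
      have h4 : -(ε/4) ≤ ⟪F (u t) - F p, e⟫ := by
        have := abs_le.1 h3
        linarith [this.1]
      rw [h2, hFpe]
      linarith
    -- the inner product ⟪u - z, e⟫ decays at definite speed
    have hφd : ∀ t, HasDerivAt (fun t => ⟪u t - z t, e⟫)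
        (⟪(-u t + z t - F (u t)) - (-z t + u t), e⟫) t := by
      intro t
      have h := HasDerivAt.inner ℝ ((hu t).sub (hz t)) (hasDerivAt_const t e)
      simpa using h
    have hdecay := my_decay hφd (by linarith : a ≤ a + s₀) (K := ε/2) ?_
    · have hwa : ‖(u a - z a)‖ ≤ 2 * (ε * s₀ / 16) := by
        have : u a - z a = (u a - p) - (z a - p) := by abel
        rw [this]
        calc ‖(u a - p) - (z a - p)‖ ≤ ‖u a - p‖ + ‖z a - p‖ := norm_sub_le _ _
          _ ≤ 2 * (ε * s₀ / 16) := by linarith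
      have h5 : ⟪u a - z a, e⟫ ≤ 2 * (ε * s₀ / 16) :=
        le_trans (le_abs_self _) (le_trans (hinner_abs _) hwa)
      have h6 : -ρ < ⟪u (a + s₀) - z (a + s₀), e⟫ := by
        have h7 := hno (a + s₀) (Set.mem_Icc.2 ⟨by linarith, le_refl _⟩)
        have h8 := (abs_le.1 (hinner_abs (u (a + s₀) - z (a + s₀)))).1
        linarith
      have h9 : ⟪u (a+s₀) - z (a+s₀), e⟫ ≤ ⟪u a - z a, e⟫ - ε/2 * (a + s₀ - a) := hdecay
      -- 2η - ε s₀/2 = εs₀/8 - εs₀/2 = -3εs₀/8 ≤ -3ρ, contradiction with > -ρ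
      have : ρ < 0 := by nlinarith
      linarith
    · intro t ht
      have h1 := hFe t ht
      have h2 := hno t ht
      have h3 : -⟪u t - z t, e⟫ ≤ ‖u t - z t‖ := by
        have := (abs_le.1 (hinner_abs (u t - z t))).1
        linarith
      have h4 : ⟪(-u t + z t - F (u t)) - (-z t + u t), e⟫
          = -2*⟪u t - z t, e⟫ - ⟪F (u t), e⟫ := by
        simp only [inner_sub_left, inner_add_left, inner_neg_left]
        ring
      rw [h4]
      have hρε : 2*ρ ≤ ε/4 := by linarith
      linarith
  -- step 2: persistence on an interval of length ρ/(4L)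
  obtain ⟨τ, hτmem, hτ⟩ := step1
  refine ⟨τ, hτmem.1, ?_⟩
  intro t ht
  have hτ0 : 0 ≤ τ := le_trans ha hτmem.1
  have ht0 : 0 ≤ t := le_trans hτ0 ht.1
  have h1 := hwL τ t hτ0 ht0
  have h2 : |t - τ| ≤ ρ/(4*L) := by
    rw [abs_of_nonneg (by linarith [ht.1])]
    linarith [ht.2]
  have h3 : ‖(u t - z t) - (u τ - z τ)‖ ≤ ρ/2 := by
    calc ‖(u t - z t) - (u τ - z τ)‖ ≤ (2*L) * |t - τ| := h1
      _ ≤ (2*L) * (ρ/(4*L)) := by nlinarith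
      _ = ρ/2 := by field_simp; ring
  have h4 : ρ/2 ≤ ‖u t - z t‖ := by
    have h5 := norm_sub_norm_le (u τ - z τ) (u t - z t)
    have h6 : ‖(u τ - z τ) - (u t - z t)‖ ≤ ρ/2 := by
      rw [← norm_neg]; simpa [neg_sub] using h3
    linarith
  calc ρ^2/4 = (ρ/2)^2 := by ring
    _ ≤ ‖u t - z t‖^2 := pow_le_pow_left₀ (by positivity) h4 2


/-- For a locally Lipschitz monotone F with nonempty zero set S, the set
A = {(u,u) : u ∈ S} attracts every solution of ż = -z+u, u̇ = -u+z-F(u):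
every solution is bounded and dist((u(t),z(t)), A) → 0 as t → ∞. -/
theorem stmt3 {m : ℕ} (F : EuclideanSpace ℝ (Fin m) → EuclideanSpace ℝ (Fin m))
    (hLip : LocallyLipschitz F)
    (hmono : ∀ u v, 0 ≤ ⟪u - v, F u - F v⟫)
    (hS : ∃ ustar, F ustar = 0)
    (z u : ℝ → EuclideanSpace ℝ (Fin m))
    (hz : ∀ t, HasDerivAt z (-z t + u t) t)
    (hu : ∀ t, HasDerivAt u (-u t + z t - F (u t)) t) :
    (∃ R : ℝ, ∀ t ≥ (0:ℝ), ‖u t‖ ≤ R ∧ ‖z t‖ ≤ R) ∧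
      Filter.Tendsto
        (fun t => Metric.infDist (u t, z t)
          {p : EuclideanSpace ℝ (Fin m) × EuclideanSpace ℝ (Fin m) |
            p.1 = p.2 ∧ F p.1 = 0})
        Filter.atTop (nhds 0) := by
  obtain ⟨us, hus⟩ := hS
  have hF : Continuous F := hLip.continuous
  have hudiff : Differentiable ℝ u := fun t => (hu t).differentiableAt
  have hzdiff : Differentiable ℝ z := fun t => (hz t).differentiableAt
  have hucont : Continuous u := hudiff.continuous
  have hzcont : Continuous z := hzdiff.continuous
  set V : ℝ → ℝ := fun t => ⟪z t - us, z t - us⟫ + ⟪u t - us, u t - us⟫ with hVdef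
  set Vd : ℝ → ℝ := fun t =>
    (⟪z t - us, -z t + u t⟫ + ⟪-z t + u t, z t - us⟫) +
    (⟪u t - us, -u t + z t - F (u t)⟫ + ⟪-u t + z t - F (u t), u t - us⟫) with hVddef
  have hV : ∀ t, HasDerivAt V (Vd t) t := by
    intro t
    exact ((HasDerivAt.inner ℝ ((hz t).sub_const us) ((hz t).sub_const us)).add
      (HasDerivAt.inner ℝ ((hu t).sub_const us) ((hu t).sub_const us)))
  have hkey : ∀ t, Vd t = -2*⟪u t - z t, u t - z t⟫ - 2*⟪u t - us, F (u t)⟫ := by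
    intro t
    exact my_inner_algebra (z t) (u t) us (F (u t))
  have hmono' : ∀ t, 0 ≤ ⟪u t - us, F (u t)⟫ := by
    intro t
    have := hmono (u t) us
    rwa [hus, sub_zero] at this
  have hVd_nonpos : ∀ t, Vd t ≤ 0 := by
    intro t
    rw [hkey t]
    have h1 : (0:ℝ) ≤ ⟪u t - z t, u t - z t⟫ := real_inner_self_nonneg
    have h2 := hmono' t
    linarith
  have hVanti : Antitone V := my_anti_of_deriv hV hVd_nonpos
  have hVeq : ∀ t, V t = ‖z t - us‖^2 + ‖u t - us‖^2 := by
    intro t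
    simp only [hVdef, real_inner_self_eq_norm_sq]
  have hVnonneg : ∀ t, 0 ≤ V t := by
    intro t; rw [hVeq t]; positivity
  set R : ℝ := ‖us‖ + Real.sqrt (V 0) with hRdef
  have hsq : 0 ≤ Real.sqrt (V 0) := Real.sqrt_nonneg _
  have hRnn : 0 ≤ R := by positivity
  have hbnd : ∀ t, 0 ≤ t → ‖u t‖ ≤ R ∧ ‖z t‖ ≤ R := by
    intro t ht
    have hVt : V t ≤ V 0 := hVanti ht
    rw [hVeq t] at hVt
    have h1 : ‖u t - us‖ ≤ Real.sqrt (V 0) := by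
      have : ‖u t - us‖^2 ≤ V 0 := by nlinarith [sq_nonneg (‖z t - us‖)]
      calc ‖u t - us‖ = Real.sqrt (‖u t - us‖^2) := (Real.sqrt_sq (norm_nonneg _)).symm
        _ ≤ Real.sqrt (V 0) := Real.sqrt_le_sqrt this
    have h2 : ‖z t - us‖ ≤ Real.sqrt (V 0) := by
      have : ‖z t - us‖^2 ≤ V 0 := by nlinarith [sq_nonneg (‖u t - us‖)]
      calc ‖z t - us‖ = Real.sqrt (‖z t - us‖^2) := (Real.sqrt_sq (norm_nonneg _)).symm
        _ ≤ Real.sqrt (V 0) := Real.sqrt_le_sqrt this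
    constructor
    · calc ‖u t‖ ≤ ‖u t - us‖ + ‖us‖ := by simpa using norm_add_le (u t - us) us
        _ ≤ R := by rw [hRdef]; linarith
    · calc ‖z t‖ ≤ ‖z t - us‖ + ‖us‖ := by simpa using norm_add_le (z t - us) us
        _ ≤ R := by rw [hRdef]; linarith
  refine ⟨⟨R, fun t ht => hbnd t ht⟩, ?_⟩
  -- the squared mismatch g and its integral bound
  set g : ℝ → ℝ := fun t => ⟪u t - z t, u t - z t⟫ with hgdef
  have hgcont : Continuous g := (hucont.sub hzcont).inner (hucont.sub hzcont)
  have hg0 : ∀ t, 0 ≤ g t := fun t => real_inner_self_nonneg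
  have hgeq : ∀ t, g t = ‖u t - z t‖^2 := fun t => real_inner_self_eq_norm_sq _
  have hVdcont : Continuous Vd := by
    have c1 : Continuous fun t => z t - us := hzcont.sub continuous_const
    have c2 : Continuous fun t => u t - us := hucont.sub continuous_const
    have c3 : Continuous fun t => -z t + u t := (hzcont.neg).add hucont
    have c4 : Continuous fun t => -u t + z t - F (u t) :=
      ((hucont.neg).add hzcont).sub (hF.comp hucont)
    exact ((c1.inner c3).add (c3.inner c1)).add ((c2.inner c4).add (c4.inner c2))
  have hC : ∀ T, 0 ≤ T → (∫ t in (0:ℝ)..T, g t) ≤ V 0 / 2 := by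
    intro T hT
    have ftc : ∫ t in (0:ℝ)..T, Vd t = V T - V 0 :=
      intervalIntegral.integral_eq_sub_of_hasDerivAt (fun x _ => hV x)
        (hVdcont.intervalIntegrable 0 T)
    have mono : (∫ t in (0:ℝ)..T, 2 * g t) ≤ ∫ t in (0:ℝ)..T, -Vd t := by
      apply intervalIntegral.integral_mono_on hT
        ((continuous_const.mul hgcont).intervalIntegrable 0 T)
        ((hVdcont.neg).intervalIntegrable 0 T)
      intro x _
      have h1 := hkey x
      have h2 := hmono' x
      simp only [hgdef, Pi.mul_apply, Pi.neg_apply]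
      rw [h1]; linarith
    rw [intervalIntegral.integral_const_mul] at mono
    rw [intervalIntegral.integral_neg, ftc] at mono
    have mono' : 2 * (∫ t in (0:ℝ)..T, g t) ≤ -(V T - V 0) := mono
    have hVT := hVnonneg T
    set I : ℝ := ∫ t in (0:ℝ)..T, g t with hIdef
    clear_value V Vd g I
    linarith
  -- bound on F over the trajectory ball, Lipschitz constants
  obtain ⟨M0, hM0⟩ := (isCompact_closedBall (0:EuclideanSpace ℝ (Fin m)) R).exists_bound_of_continuousOn hF.continuousOn
  have hM0nn : 0 ≤ M0 :=
    le_trans (norm_nonneg _) (hM0 0 (Metric.mem_closedBall_self hRnn))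
  set L : ℝ := 2*R + M0 + 1 with hLdef
  have hL : 0 < L := by positivity
  have hFb : ∀ t, 0 ≤ t → ‖F (u t)‖ ≤ M0 := by
    intro t ht
    exact hM0 (u t) (Metric.mem_closedBall.2 (by simpa using (hbnd t ht).1))
  have huLip : ∀ a b : ℝ, 0 ≤ a → 0 ≤ b → ‖u b - u a‖ ≤ L * |b - a| := by
    intro a b ha hb
    have key := Convex.norm_image_sub_le_of_norm_hasDerivWithin_le
      (f := u) (f' := fun t => -u t + z t - F (u t)) (s := Set.Ici (0:ℝ)) (C := L)
      (fun x _ => (hu x).hasDerivWithinAt) ?_ (convex_Ici 0) ha hb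
    · simpa [Real.norm_eq_abs] using key
    · intro x hx
      have h1 := (hbnd x hx).1
      have h2 := (hbnd x hx).2
      have h3 := hFb x hx
      calc ‖-u x + z x - F (u x)‖ ≤ ‖-u x + z x‖ + ‖F (u x)‖ := norm_sub_le _ _
        _ ≤ ‖u x‖ + ‖z x‖ + ‖F (u x)‖ := by
            have := norm_add_le (-u x) (z x)
            simp only [norm_neg] at this; linarith
        _ ≤ L := by rw [hLdef]; linarith
  have hwLip : ∀ a b : ℝ, 0 ≤ a → 0 ≤ b →
      ‖(u b - z b) - (u a - z a)‖ ≤ (2*L) * |b - a| := by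
    intro a b ha hb
    have key := Convex.norm_image_sub_le_of_norm_hasDerivWithin_le
      (f := fun t => u t - z t)
      (f' := fun t => (-u t + z t - F (u t)) - (-z t + u t)) (s := Set.Ici (0:ℝ)) (C := 2*L)
      (fun x _ => ((hu x).sub (hz x)).hasDerivWithinAt) ?_ (convex_Ici 0) ha hb
    · simpa [Real.norm_eq_abs] using key
    · intro x hx
      have h1 := (hbnd x hx).1
      have h2 := (hbnd x hx).2
      have h3 := hFb x hx
      calc ‖(-u x + z x - F (u x)) - (-z x + u x)‖
          ≤ ‖-u x + z x - F (u x)‖ + ‖-z x + u x‖ := norm_sub_le _ _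
        _ ≤ (‖-u x + z x‖ + ‖F (u x)‖) + (‖z x‖ + ‖u x‖) := by
            have ha1 := norm_sub_le (-u x + z x) (F (u x))
            have ha2 := norm_add_le (-z x) (u x)
            simp only [norm_neg] at ha2
            linarith
        _ ≤ (‖u x‖ + ‖z x‖ + ‖F (u x)‖) + (‖z x‖ + ‖u x‖) := by
            have := norm_add_le (-u x) (z x)
            simp only [norm_neg] at this; linarith
        _ ≤ 2*L := by rw [hLdef]; linarith
  clear_value V Vd R g L
  -- Suppose infDist does not tend to zero
  by_contra hcon
  rw [Metric.tendsto_atTop] at hcon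
  push_neg at hcon
  obtain ⟨ε₀, hε₀, hfar⟩ := hcon
  set SA := {p : EuclideanSpace ℝ (Fin m) × EuclideanSpace ℝ (Fin m) |
      p.1 = p.2 ∧ F p.1 = 0} with hSAdef
  have pickt : ∀ n : ℕ, ∃ t : ℝ, (n:ℝ) ≤ t ∧
      ε₀ ≤ Metric.infDist (u t, z t) SA := by
    intro n
    obtain ⟨t, ht1, ht2⟩ := hfar (n:ℝ)
    refine ⟨t, ht1, ?_⟩
    rw [Real.dist_eq, sub_zero, abs_of_nonneg Metric.infDist_nonneg] at ht2
    exact ht2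
  choose tn htn1 htn2 using pickt
  have htn0 : ∀ n, 0 ≤ tn n := fun n => le_trans (Nat.cast_nonneg n) (htn1 n)
  -- compactness: limit point of the sampled states
  have hK : IsCompact ((Metric.closedBall (0:EuclideanSpace ℝ (Fin m)) R) ×ˢ
      (Metric.closedBall (0:EuclideanSpace ℝ (Fin m)) R)) :=
    (isCompact_closedBall _ _).prod (isCompact_closedBall _ _)
  have hmemK : ∀ n : ℕ, (u (tn n), z (tn n)) ∈
      ((Metric.closedBall (0:EuclideanSpace ℝ (Fin m)) R) ×ˢ
       (Metric.closedBall (0:EuclideanSpace ℝ (Fin m)) R)) := by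
    intro n
    refine Set.mem_prod.2 ⟨?_, ?_⟩
    · exact Metric.mem_closedBall.2 (by simpa using (hbnd (tn n) (htn0 n)).1)
    · exact Metric.mem_closedBall.2 (by simpa using (hbnd (tn n) (htn0 n)).2)
  obtain ⟨⟨p, q⟩, hpqK, φ, hφmono, hφconv⟩ := hK.tendsto_subseq hmemK
  have hpu : Filter.Tendsto (fun k => u (tn (φ k))) Filter.atTop (nhds p) :=
    (continuous_fst.tendsto (p, q)).comp hφconv
  have hpz : Filter.Tendsto (fun k => z (tn (φ k))) Filter.atTop (nhds q) :=
    (continuous_snd.tendsto (p, q)).comp hφconv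
  have hpball : ‖p‖ ≤ R := by
    have := (Set.mem_prod.1 hpqK).1
    simpa using Metric.mem_closedBall.1 this
  have hφge : ∀ k : ℕ, (k:ℝ) ≤ tn (φ k) := by
    intro k
    calc (k:ℝ) ≤ (φ k : ℝ) := by exact_mod_cast hφmono.le_apply
      _ ≤ tn (φ k) := htn1 (φ k)
  by_cases hpq : p = q
  · by_cases hFp : F p = 0
    · -- limit point is in SA : contradiction with infDist ≥ ε₀
      have hmem : (p, q) ∈ SA := ⟨hpq, hFp⟩
      have hdist : Filter.Tendsto (fun k => dist ((u (tn (φ k)), z (tn (φ k)))) (p, q))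
          Filter.atTop (nhds 0) := tendsto_iff_dist_tendsto_zero.1 hφconv
      have hev : ∀ᶠ k in Filter.atTop,
          dist ((u (tn (φ k)), z (tn (φ k)))) (p, q) < ε₀ := by
        have : Set.Iio ε₀ ∈ nhds (0:ℝ) := Iio_mem_nhds hε₀
        exact hdist.eventually (by filter_upwards [this] with x hx using hx)
      obtain ⟨k, hk⟩ := hev.exists
      have hle : Metric.infDist ((u (tn (φ k)), z (tn (φ k)))) SA ≤
          dist ((u (tn (φ k)), z (tn (φ k)))) (p, q) :=
        Metric.infDist_le_dist_of_mem hmem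
      have := htn2 (φ k)
      linarith
    · -- hard case : p = q but F p ≠ 0
      have hε : (0:ℝ) < ‖F p‖ := norm_pos_iff.2 hFp
      have hpz' : Filter.Tendsto (fun k => z (tn (φ k))) Filter.atTop (nhds p) := by
        rw [hpq]; exact hpz
      have hFpM : ‖F p‖ ≤ M0 := hM0 p (Metric.mem_closedBall.2 (by simpa using hpball))
      have hFpL : ‖F p‖ ≤ L := by rw [hLdef]; linarith
      obtain ⟨r0, hr0, hr0F⟩ := Metric.continuousAt_iff.1 hF.continuousAt (‖F p‖/4)
        (by linarith)
      have hrF : ∀ y, ‖y - p‖ ≤ r0/2 → ‖F y - F p‖ ≤ ‖F p‖/4 := by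
        intro y hy
        have h1 : dist y p < r0 := by rw [dist_eq_norm]; linarith
        have h2 := hr0F h1
        rw [dist_eq_norm] at h2
        linarith
      have hr02 : (0:ℝ) < r0/2 := by linarith
      obtain ⟨c, δ, hc, hδ, Hmain⟩ := my_case3 hu hz hFp hL hFpL huLip hwLip hr02 hrF
      refine my_blowup hgcont hg0 (C := V 0/2) hc hδ hC ?_
      intro n
      have hηpos : 0 < ‖F p‖ * ((r0/2)/(2*L))/16 := by
        have h1 : (0:ℝ) < (r0/2)/(2*L) := div_pos hr02 (by linarith)
        have h2 : (0:ℝ) < ‖F p‖ * ((r0/2)/(2*L)) := mul_pos hε h1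
        linarith
      obtain ⟨K₁, hK₁⟩ := Metric.tendsto_atTop.1 hpu _ hηpos
      obtain ⟨K₂, hK₂⟩ := Metric.tendsto_atTop.1 hpz' _ hηpos
      set k := max n (max K₁ K₂) with hkdef
      set a := tn (φ k) with hadef
      have hu_a : ‖u a - p‖ ≤ ‖F p‖ * ((r0/2)/(2*L))/16 := by
        have h := hK₁ k (le_trans (le_max_left _ _) (le_max_right _ _))
        rw [dist_eq_norm] at h
        exact le_of_lt h
      have hz_a : ‖z a - p‖ ≤ ‖F p‖ * ((r0/2)/(2*L))/16 := by
        have h := hK₂ k (le_trans (le_max_right _ _) (le_max_right _ _))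
        rw [dist_eq_norm] at h
        exact le_of_lt h
      have han : (n:ℝ) ≤ a := by
        calc (n:ℝ) ≤ (k:ℝ) := by exact_mod_cast le_max_left _ _
          _ ≤ a := hφge k
      have ha0 : 0 ≤ a := htn0 (φ k)
      clear_value k a
      obtain ⟨sτ, hs1, hs2⟩ := Hmain a ha0 hu_a hz_a
      refine ⟨sτ, le_trans han hs1, ?_⟩
      intro t ht
      rw [hgeq t]
      exact hs2 t ht
  · -- case p ≠ q : ‖u - z‖ stays large on late intervals
    set d : ℝ := ‖p - q‖ with hddef
    have hd : 0 < d := by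
      rw [hddef]
      exact norm_pos_iff.2 (sub_ne_zero.2 hpq)
    have hwconv : Filter.Tendsto (fun k => ‖u (tn (φ k)) - z (tn (φ k))‖)
        Filter.atTop (nhds d) := (hpu.sub hpz).norm
    clear_value d
    have hev : ∀ᶠ k in Filter.atTop, d/2 < ‖u (tn (φ k)) - z (tn (φ k))‖ :=
      hwconv.eventually (eventually_gt_nhds (by linarith))
    obtain ⟨K₀, hK₀⟩ := Filter.eventually_atTop.1 hev
    refine my_blowup hgcont hg0 (C := V 0 / 2)
      (c := (d/4)^2) (δ := d/(8*L)) (by positivity) (by positivity) hC ?_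
    intro n
    set k := max n K₀ with hkdef
    set a := tn (φ k) with hadef
    have hka : d/2 < ‖u a - z a‖ := hK₀ k (le_max_right _ _)
    have han : (n:ℝ) ≤ a := by
      calc (n:ℝ) ≤ (k:ℝ) := by exact_mod_cast le_max_left n K₀
        _ ≤ a := hφge k
    have ha0 : 0 ≤ a := htn0 (φ k)
    clear_value k a
    refine ⟨a, han, ?_⟩
    intro t ht
    obtain ⟨ht1, ht2⟩ := ht
    have ht0 : 0 ≤ t := le_trans ha0 ht1
    have hlip := hwLip a t ha0 ht0
    have habs : |t - a| ≤ d/(8*L) := by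
      rw [abs_of_nonneg (by linarith)]
      linarith
    have h2 : ‖(u t - z t) - (u a - z a)‖ ≤ d/4 := by
      calc ‖(u t - z t) - (u a - z a)‖ ≤ (2*L) * |t - a| := hlip
        _ ≤ (2*L) * (d/(8*L)) := by
            apply mul_le_mul_of_nonneg_left habs (by positivity)
        _ = d/4 := by field_simp; ring
    have h3 : d/4 ≤ ‖u t - z t‖ := by
      have := norm_sub_norm_le (u a - z a) (u t - z t)
      have h4 : ‖(u a - z a) - (u t - z t)‖ ≤ d/4 := by
        rw [← norm_neg]; simpa [neg_sub] using h2
      linarith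
    rw [hgeq t]
    exact pow_le_pow_left₀ (by positivity) h3 2
end

section
/- In contrast, for the skew game F(u₁,u₂) = (u₂ - b, -(u₁ - a)), every solution of the golden-ratio dynamics ż = -z + u, u̇ = -u + z - F(u) on ℝ⁴ converges to the point (a, b, a, b), i.e., the set A = {(u,z) : u = z = (a,b)} is globally asymptotically stable. -/
open Complex Filter

/-- A complex ODE f' = c f has solution f 0 * exp(c t). -/
lemma ode_sol (c : ℂ) (f : ℝ → ℂ) (hf : ∀ t, HasDerivAt f (c * f t) t) :
    ∀ t, f t = f 0 * Complex.exp (c * t) := by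
  have key : ∀ t, f t * Complex.exp (-(c * t)) = f 0 * Complex.exp (-(c * 0)) := by
    set g : ℝ → ℂ := fun t => f t * Complex.exp (-(c * t)) with hg
    have hgd : ∀ t, HasDerivAt g 0 t := by
      intro t
      have h1 : HasDerivAt (fun t : ℝ => -(c * t)) (-c) t := by
        have := ((hasDerivAt_id t).ofReal_comp).const_mul c
        have h' := this.neg
        simp only [id, Complex.ofReal_one, mul_one] at h'
        exact h'
      have h2 : HasDerivAt (fun t : ℝ => Complex.exp (-(c * t)))
          (Complex.exp (-(c * t)) * (-c)) t := h1.cexp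
      have := (hf t).mul h2
      refine this.congr_deriv ?_
      ring
    have hdiff : Differentiable ℝ g := fun t => (hgd t).differentiableAt
    have hderiv : ∀ t, deriv g t = 0 := fun t => (hgd t).deriv
    intro t
    exact is_const_of_deriv_eq_zero hdiff hderiv t 0
  intro t
  have h := key t
  have hne : Complex.exp (-(c * t)) ≠ 0 := Complex.exp_ne_zero _
  simp only [mul_zero, neg_zero, Complex.exp_zero, mul_one] at h
  rw [← h]
  rw [mul_assoc, ← Complex.exp_add]
  simp

/-- Exponential decay: if Re c < 0 then f 0 * exp(c t) → 0 as t → ∞. -/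
lemma ode_decay (c : ℂ) (hc : c.re < 0) (f : ℝ → ℂ)
    (hf : ∀ t, HasDerivAt f (c * f t) t) :
    Tendsto f atTop (nhds 0) := by
  have hsol := ode_sol c f hf
  rw [tendsto_zero_iff_norm_tendsto_zero]
  have heq : ∀ t : ℝ, ‖f t‖ = ‖f 0‖ * Real.exp (c.re * t) := by
    intro t
    rw [hsol t, norm_mul, Complex.norm_exp]
    norm_num
  have heq' : (fun t => ‖f t‖) = fun t => ‖f 0‖ * Real.exp (c.re * t) :=
    funext heq
  rw [heq']
  have h1 : Tendsto (fun t : ℝ => c.re * t) atTop atBot :=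
    tendsto_id.const_mul_atTop_of_neg hc
  have h2 : Tendsto (fun t : ℝ => Real.exp (c.re * t)) atTop (nhds 0) :=
    Real.tendsto_exp_atBot.comp h1
  simpa using h2.const_mul ‖f 0‖

/-- For the skew map F(u₁,u₂) = (u₂-b, -(u₁-a)), every solution of the
golden-ratio dynamics ż = -z+u, u̇ = -u+z-F(u) converges to (a,b,a,b). -/
theorem stmt8 (a b : ℝ) (z₁ z₂ u₁ u₂ : ℝ → ℝ)
    (hz₁ : ∀ t, HasDerivAt z₁ (-z₁ t + u₁ t) t)
    (hz₂ : ∀ t, HasDerivAt z₂ (-z₂ t + u₂ t) t)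
    (hu₁ : ∀ t, HasDerivAt u₁ (-u₁ t + z₁ t - (u₂ t - b)) t)
    (hu₂ : ∀ t, HasDerivAt u₂ (-u₂ t + z₂ t - (-(u₁ t - a))) t) :
    Filter.Tendsto u₁ Filter.atTop (nhds a) ∧
    Filter.Tendsto u₂ Filter.atTop (nhds b) ∧
    Filter.Tendsto z₁ Filter.atTop (nhds a) ∧
    Filter.Tendsto z₂ Filter.atTop (nhds b) := by
  -- complexify
  set v : ℝ → ℂ := fun t => ((z₁ t : ℂ) - a) + ((z₂ t : ℂ) - b) * I with hvdef
  set w : ℝ → ℂ := fun t => ((u₁ t : ℂ) - a) + ((u₂ t : ℂ) - b) * I with hwdef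
  have hv : ∀ t, HasDerivAt v (-(v t) + w t) t := by
    intro t
    have h := (((hz₁ t).ofReal_comp.sub_const (a : ℂ)).add
      (((hz₂ t).ofReal_comp.sub_const (b : ℂ)).mul_const I))
    refine h.congr_deriv ?_; symm
    simp only [hvdef, hwdef]
    push_cast
    ring
  have hw : ∀ t, HasDerivAt w (v t + (I - 1) * w t) t := by
    intro t
    have h := (((hu₁ t).ofReal_comp.sub_const (a : ℂ)).add
      (((hu₂ t).ofReal_comp.sub_const (b : ℂ)).mul_const I))
    refine h.congr_deriv ?_; symm
    simp only [hvdef, hwdef]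
    push_cast
    linear_combination ((u₂ t : ℂ) - (b : ℂ)) * Complex.I_sq
  -- eigen-coordinates
  have key : ∀ s : ℝ, (s : ℂ)^2 = 3 →
      ∀ t, HasDerivAt (fun t => v t + (((s : ℂ) - 2 + I)/2 + 1) * w t)
        ((((s : ℂ) - 2 + I)/2) * (v t + (((s : ℂ) - 2 + I)/2 + 1) * w t)) t := by
    intro s hs2 t
    have h := (hv t).add ((hw t).const_mul (((s : ℂ) - 2 + I)/2 + 1))
    refine h.congr_deriv ?_; symm
    linear_combination (-(w t)/4) * Complex.I_sq + ((w t)/4) * hs2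
  have hs2 : ((Real.sqrt 3 : ℝ) : ℂ)^2 = 3 := by
    rw [← Complex.ofReal_pow, Real.sq_sqrt (by norm_num : (3:ℝ) ≥ 0)]
    norm_num
  have hs2' : ((-Real.sqrt 3 : ℝ) : ℂ)^2 = 3 := by
    push_cast
    rw [neg_pow]
    rw [← Complex.ofReal_pow] at hs2
    push_cast at hs2
    rw [hs2]; norm_num
  have hre : ∀ s : ℝ, ((((s : ℝ) : ℂ) - 2 + I)/2).re = (s - 2)/2 := by
    intro s
    have e : (((s : ℝ) : ℂ) - 2 + I)/2
        = Complex.ofReal ((s - 2)/2) + Complex.ofReal ((2:ℝ)⁻¹) * I := by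
      push_cast; ring
    rw [e]
    simp
  set l₁ : ℂ := (((Real.sqrt 3 : ℝ) : ℂ) - 2 + I)/2 with hl₁
  set l₂ : ℂ := (((-Real.sqrt 3 : ℝ) : ℂ) - 2 + I)/2 with hl₂
  have h3 : Real.sqrt 3 < 2 := by
    nlinarith [Real.sq_sqrt (show (0:ℝ) ≤ 3 by norm_num), Real.sqrt_nonneg 3]
  have hre₁ : l₁.re < 0 := by
    rw [hl₁, hre]; linarith
  have hre₂ : l₂.re < 0 := by
    rw [hl₂, hre]; linarith [Real.sqrt_nonneg 3]
  have hf1 : Tendsto (fun t => v t + (l₁ + 1) * w t) atTop (nhds 0) :=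
    ode_decay l₁ hre₁ _ (key _ hs2)
  have hf2 : Tendsto (fun t => v t + (l₂ + 1) * w t) atTop (nhds 0) :=
    ode_decay l₂ hre₂ _ (key _ hs2')
  have hsne : ((Real.sqrt 3 : ℝ) : ℂ) ≠ 0 := by
    simp [Real.sqrt_eq_zero']
  have hw0 : Tendsto w atTop (nhds 0) := by
    have h := (hf1.sub hf2).const_mul (((Real.sqrt 3 : ℝ) : ℂ))⁻¹
    simp only [sub_zero, mul_zero] at h
    convert h using 2 with t
    field_simp [hl₁, hl₂]
    ring
    rw [hl₁, hl₂]; push_cast; ring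
  have hv0 : Tendsto v atTop (nhds 0) := by
    have h := hf1.sub (hw0.const_mul (l₁ + 1))
    simp only [mul_zero, sub_zero] at h
    convert h using 2 with t
    ring
  -- extract real components
  have hwre : Tendsto (fun t => (w t).re) atTop (nhds 0) := by
    have := (Complex.continuous_re.tendsto 0).comp hw0
    simpa [Function.comp_def] using this
  have hwim : Tendsto (fun t => (w t).im) atTop (nhds 0) := by
    have := (Complex.continuous_im.tendsto 0).comp hw0
    simpa [Function.comp_def] using this
  have hvre : Tendsto (fun t => (v t).re) atTop (nhds 0) := by
    have := (Complex.continuous_re.tendsto 0).comp hv0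
    simpa [Function.comp_def] using this
  have hvim : Tendsto (fun t => (v t).im) atTop (nhds 0) := by
    have := (Complex.continuous_im.tendsto 0).comp hv0
    simpa [Function.comp_def] using this
  have ew : ∀ t, (w t).re = u₁ t - a ∧ (w t).im = u₂ t - b := by
    intro t; constructor <;> simp [hwdef]
  have ev : ∀ t, (v t).re = z₁ t - a ∧ (v t).im = z₂ t - b := by
    intro t; constructor <;> simp [hvdef]
  refine ⟨?_, ?_, ?_, ?_⟩
  · have h : Tendsto (fun t => u₁ t - a) atTop (nhds 0) := by
      convert hwre using 2 with t; exact ((ew t).1).symm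
    simpa using h.add_const a
  · have h : Tendsto (fun t => u₂ t - b) atTop (nhds 0) := by
      convert hwim using 2 with t; exact ((ew t).2).symm
    simpa using h.add_const b
  · have h : Tendsto (fun t => z₁ t - a) atTop (nhds 0) := by
      convert hvre using 2 with t; exact ((ev t).1).symm
    simpa using h.add_const a
  · have h : Tendsto (fun t => z₂ t - b) atTop (nhds 0) := by
      convert hvim using 2 with t; exact ((ev t).2).symm
    simpa using h.add_const b
end

section
/- Let F : ℝ^m → ℝ^m be monotone with F(u*) = 0, and let Γ, E be diagonal positive definite matrices. Then along the scaled dynamics ż = ΓE(-z + u), u̇ = ΓE(-u + z - F(u)), the weighted Lyapunov function V(u,z) = ½‖z - u*‖²_{(ΓE)^{-1}} + ½‖u - u*‖²_{(ΓE)^{-1}} satisfies V̇ ≤ -‖u - z‖². -/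
open RealInnerProductSpace

/-- With diagonal positive gains Γ = diag(γᵢ), E = diag(εᵢ), along the scaled
dynamics żᵢ = γᵢεᵢ(-zᵢ+uᵢ), u̇ᵢ = γᵢεᵢ(-uᵢ+zᵢ-Fᵢ(u)), the weighted Lyapunov
function V = ½‖z-u*‖²_{(ΓE)⁻¹} + ½‖u-u*‖²_{(ΓE)⁻¹} satisfies V̇ ≤ -‖u-z‖². -/
theorem stmt9 {m : ℕ} (F : EuclideanSpace ℝ (Fin m) → EuclideanSpace ℝ (Fin m))
    (hmono : ∀ u v, 0 ≤ ⟪u - v, F u - F v⟫)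
    (ustar : EuclideanSpace ℝ (Fin m)) (hzero : F ustar = 0)
    (γ ε : Fin m → ℝ) (hγ : ∀ i, 0 < γ i) (hε : ∀ i, 0 < ε i)
    (z u : ℝ → EuclideanSpace ℝ (Fin m))
    (hz : ∀ t i, HasDerivAt (fun s => z s i) (γ i * ε i * (-(z t i) + u t i)) t)
    (hu : ∀ t i, HasDerivAt (fun s => u s i)
      (γ i * ε i * (-(u t i) + z t i - F (u t) i)) t) :
    ∀ t : ℝ, ∃ d : ℝ,
      HasDerivAt (fun s => ∑ i, (1 / (γ i * ε i)) *
          ((z s i - ustar i) ^ 2 / 2 + (u s i - ustar i) ^ 2 / 2)) d t ∧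
      d ≤ -‖u t - z t‖ ^ 2 := by
  intro t
  refine ⟨∑ i, ((z t i - ustar i) * (-(z t i) + u t i) +
      (u t i - ustar i) * (-(u t i) + z t i - F (u t) i)), ?_, ?_⟩
  · apply HasDerivAt.fun_sum
    intro i _
    have hne : γ i * ε i ≠ 0 := by have := hγ i; have := hε i; positivity
    have h1 := (((hz t i).sub_const (ustar i)).fun_pow 2).div_const 2
    have h2 := (((hu t i).sub_const (ustar i)).fun_pow 2).div_const 2
    have h3 := (h1.fun_add h2).const_mul (1 / (γ i * ε i))
    convert h3 using 1
    · rfl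
    field_simp [(hγ i).ne', (hε i).ne']
    ring
  · have hmon := hmono (u t) ustar
    rw [hzero, sub_zero] at hmon
    have hv : ⟪u t - ustar, F (u t)⟫ = ∑ i, (u t i - ustar i) * F (u t) i := by
      simp [PiLp.inner_apply, RCLike.inner_apply, PiLp.sub_apply, mul_comm]
    have hnorm : ‖u t - z t‖ ^ 2 = ∑ i, (u t i - z t i) ^ 2 := by
      rw [← real_inner_self_eq_norm_sq]
      simp only [PiLp.inner_apply, PiLp.sub_apply, RCLike.inner_apply, conj_trivial, sq, mul_comm]
    have hsum : (∑ i, ((z t i - ustar i) * (-(z t i) + u t i) +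
        (u t i - ustar i) * (-(u t i) + z t i - F (u t) i))) =
        -(∑ i, (u t i - z t i) ^ 2) - ∑ i, (u t i - ustar i) * F (u t) i := by
      rw [← Finset.sum_neg_distrib, ← Finset.sum_sub_distrib]
      exact Finset.sum_congr rfl fun i _ => by ring
    rw [hsum, hnorm]
    rw [hv] at hmon
    linarith
end

section
/- Counterexample to projected golden-ratio Lyapunov decrease: there exist a monotone map F on ℝ² (namely F(u₁,u₂) = (u₂, -u₁)), a closed convex set Ω ⊂ ℝ², a point u = z ∈ Ω, and u* ∈ Ω with F(u*) = 0, such that the derivative of V(u,z) = ½‖z - u*‖² + ½‖u - u*‖² along ż = -z + u, u̇ = -u + proj_Ω(z - F(u)) is strictly positive at (u,z). -/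
open RealInnerProductSpace

/-- Counterexample for the projected golden-ratio scheme: for the monotone map
F(u₁,u₂) = (u₂, -u₁) (with F(0) = 0 and u* = 0), there exist a closed convex set
Ω ∋ 0 and a point u = z ∈ Ω such that the derivative of
V(u,z) = ½‖z‖² + ½‖u‖² along ż = -z+u, u̇ = -u + proj_Ω(z - F(u)) is strictly
positive, namely ⟪u, -u + proj_Ω(u - F(u))⟫ > 0. -/
theorem stmt15 (F : EuclideanSpace ℝ (Fin 2) → EuclideanSpace ℝ (Fin 2))
    (hF : ∀ u, F u 0 = u 1 ∧ F u 1 = -(u 0)) :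
    ∃ (Ω : Set (EuclideanSpace ℝ (Fin 2))) (u p : EuclideanSpace ℝ (Fin 2)),
      IsClosed Ω ∧ Convex ℝ Ω ∧ (0 : EuclideanSpace ℝ (Fin 2)) ∈ Ω ∧ u ∈ Ω ∧
      p ∈ Ω ∧ (∀ w ∈ Ω, ‖u - F u - p‖ ≤ ‖u - F u - w‖) ∧
      0 < ⟪u, -u + p⟫ := by
  set u : EuclideanSpace ℝ (Fin 2) := !₂[1, 0] with hu
  set p : EuclideanSpace ℝ (Fin 2) := !₂[6/5, 3/5] with hp
  have hu0 : u 0 = 1 := rfl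
  have hu1 : u 1 = 0 := rfl
  have hp0 : p 0 = 6/5 := rfl
  have hp1 : p 1 = 3/5 := rfl
  refine ⟨{x | x 1 ≤ x 0 / 2}, u, p, ?_, ?_, ?_, ?_, ?_, ?_, ?_⟩
  · have : {x : EuclideanSpace ℝ (Fin 2) | x 1 ≤ x 0 / 2}
        = {x : EuclideanSpace ℝ (Fin 2) | x 1 - x 0 / 2 ≤ 0} := by
      ext x; simp [sub_nonpos]
    rw [this]
    exact isClosed_le (by fun_prop) continuous_const
  · intro x hx y hy a b ha hb hab
    simp only [Set.mem_setOf_eq] at hx hy ⊢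
    have e0 : (a • x + b • y : EuclideanSpace ℝ (Fin 2)) 0 = a * x 0 + b * y 0 := rfl
    have e1 : (a • x + b • y : EuclideanSpace ℝ (Fin 2)) 1 = a * x 1 + b * y 1 := rfl
    rw [e0, e1]
    nlinarith [mul_le_mul_of_nonneg_left hx ha, mul_le_mul_of_nonneg_left hy hb]
  · show (0 : EuclideanSpace ℝ (Fin 2)) 1 ≤ (0 : EuclideanSpace ℝ (Fin 2)) 0 / 2
    have z0 : (0 : EuclideanSpace ℝ (Fin 2)) 0 = 0 := rfl
    have z1 : (0 : EuclideanSpace ℝ (Fin 2)) 1 = 0 := rfl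
    rw [z0, z1]; norm_num
  · show u 1 ≤ u 0 / 2; rw [hu0, hu1]; norm_num
  · show p 1 ≤ p 0 / 2; rw [hp0, hp1]; norm_num
  · intro w hw
    simp only [Set.mem_setOf_eq] at hw
    have h0 := (hF u).1
    have h1 := (hF u).2
    have hv0 : (u - F u - p) 0 = -(1/5) := by
      simp [PiLp.sub_apply, h0, hu0, hu1, hp0]; norm_num
    have hv1 : (u - F u - p) 1 = 2/5 := by
      simp [PiLp.sub_apply, h1, hu0, hu1, hp1]; norm_num
    have hw0 : (u - F u - w) 0 = 1 - w 0 := by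
      simp [PiLp.sub_apply, h0, hu0, hu1]
    have hw1 : (u - F u - w) 1 = 1 - w 1 := by
      simp [PiLp.sub_apply, h1, hu0, hu1]
    rw [EuclideanSpace.norm_eq, EuclideanSpace.norm_eq]
    apply Real.sqrt_le_sqrt
    rw [Fin.sum_univ_two, Fin.sum_univ_two, hv0, hv1, hw0, hw1]
    simp only [Real.norm_eq_abs, sq_abs]
    nlinarith [sq_nonneg (w 0 - 6/5), sq_nonneg (w 1 - 3/5), hw]
  · have : ⟪u, -u + p⟫ = (1/5 : ℝ) := by
      rw [PiLp.inner_apply, Fin.sum_univ_two]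
      have e0 : (-u + p) 0 = -u 0 + p 0 := rfl
      have e1 : (-u + p) 1 = -u 1 + p 1 := rfl
      rw [e0, e1, hu0, hu1, hp0, hp1]
      norm_num
    rw [this]; norm_num
end

section
/- For the linear monotone map F(u) = Mu with M having positive semidefinite symmetric part, the golden-ratio linear system ż = -z + u, u̇ = -u + z - Mu has all eigenvalues with nonpositive real part, and any eigenvalue with zero real part corresponding to an eigenvector (z₀, u₀) must satisfy u₀ = z₀ and Mu₀ = 0. -/
/-- For F(u) = Mu with (M+Mᵀ)/2 ⪰ 0, every eigenvalue c of the golden-ratio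
system matrix [[-I, I],[I, -I-M]] satisfies Re(c) ≤ 0, and if Re(c) = 0 then the
eigenvector (z₀,u₀) satisfies u₀ = z₀ and Mu₀ = 0. -/
theorem stmt17 {m : ℕ} (M : Matrix (Fin m) (Fin m) ℝ)
    (hM : ∀ x : Fin m → ℝ, 0 ≤ dotProduct x (M.mulVec x)) :
    ∀ (c : ℂ) (z₀ u₀ : Fin m → ℂ),
      (z₀, u₀) ≠ 0 →
      (-z₀ + u₀ = c • z₀) →
      (z₀ - u₀ - (M.map (Complex.ofReal)).mulVec u₀ = c • u₀) →
      c.re ≤ 0 ∧ (c.re = 0 → u₀ = z₀ ∧ (M.map (Complex.ofReal)).mulVec u₀ = 0) := by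
  intro c z₀ u₀ hne h1 h2
  set a : Fin m → ℝ := fun i => (u₀ i).re with ha
  set b : Fin m → ℝ := fun i => (u₀ i).im with hb
  set N : ℝ := (∑ i, Complex.normSq (z₀ i)) + ∑ i, Complex.normSq (u₀ i) with hN
  set D : ℝ := ∑ i, Complex.normSq (z₀ i - u₀ i) with hD
  set Q : ℝ := ∑ i, ((starRingEnd ℂ) (u₀ i) * (M.map (Complex.ofReal)).mulVec u₀ i).re with hQ
  have hDnn : 0 ≤ D := Finset.sum_nonneg fun i _ => Complex.normSq_nonneg _
  have hQeq : Q = dotProduct a (M.mulVec a) + dotProduct b (M.mulVec b) := by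
    have : Q = ∑ i, ∑ j, (M i j * (a i * a j) + M i j * (b i * b j)) := by
      rw [hQ]
      refine Finset.sum_congr rfl fun i _ => ?_
      rw [Matrix.mulVec, dotProduct, Finset.mul_sum, Complex.re_sum]
      refine Finset.sum_congr rfl fun j _ => ?_
      simp [Matrix.map_apply, Complex.mul_re, ha, hb]
      ring
    rw [this, dotProduct, dotProduct]
    rw [← Finset.sum_add_distrib]
    refine Finset.sum_congr rfl fun i _ => ?_
    rw [Finset.sum_add_distrib, Matrix.mulVec, Matrix.mulVec, dotProduct,
      dotProduct, Finset.mul_sum, Finset.mul_sum]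
    congr 1 <;> exact Finset.sum_congr rfl fun j _ => by ring
  have hQnn : 0 ≤ Q := by rw [hQeq]; exact add_nonneg (hM a) (hM b)
  have key : c.re * N = -D - Q := by
    have e1 : ∀ (v : Fin m → ℂ), (∑ i, ((starRingEnd ℂ) (v i) * (c • v) i).re)
        = c.re * ∑ i, Complex.normSq (v i) := by
      intro v
      rw [Finset.mul_sum]
      exact Finset.sum_congr rfl fun i _ => by
        simp [Complex.mul_re, Complex.normSq_apply]; ring
    have lhs : (∑ i, ((starRingEnd ℂ) (z₀ i) * (c • z₀) i).re)
        + ∑ i, ((starRingEnd ℂ) (u₀ i) * (c • u₀) i).re = c.re * N := by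
      rw [e1, e1, hN, mul_add]
    rw [← lhs, ← h1, ← h2]
    have : ∀ i, ((starRingEnd ℂ) (z₀ i) * (-z₀ + u₀) i).re
        + ((starRingEnd ℂ) (u₀ i) * (z₀ - u₀ - (M.map Complex.ofReal).mulVec u₀) i).re
        = -Complex.normSq (z₀ i - u₀ i)
          - ((starRingEnd ℂ) (u₀ i) * (M.map (Complex.ofReal)).mulVec u₀ i).re := by
      intro i
      simp only [Pi.add_apply, Pi.neg_apply, Pi.sub_apply]
      simp [Complex.mul_re, Complex.normSq_apply]
      ring
    calc (∑ i, ((starRingEnd ℂ) (z₀ i) * (-z₀ + u₀) i).re)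
        + ∑ i, ((starRingEnd ℂ) (u₀ i) * (z₀ - u₀ - (M.map Complex.ofReal).mulVec u₀) i).re
        = ∑ i, (((starRingEnd ℂ) (z₀ i) * (-z₀ + u₀) i).re
          + ((starRingEnd ℂ) (u₀ i) * (z₀ - u₀ - (M.map Complex.ofReal).mulVec u₀) i).re) := by
          rw [Finset.sum_add_distrib]
      _ = ∑ i, (-Complex.normSq (z₀ i - u₀ i)
          - ((starRingEnd ℂ) (u₀ i) * (M.map (Complex.ofReal)).mulVec u₀ i).re) :=
          Finset.sum_congr rfl fun i _ => this i
      _ = -D - Q := by rw [Finset.sum_sub_distrib, Finset.sum_neg_distrib]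
  have hNnn : 0 ≤ N := add_nonneg (Finset.sum_nonneg fun i _ => Complex.normSq_nonneg _)
    (Finset.sum_nonneg fun i _ => Complex.normSq_nonneg _)
  have hNpos : 0 < N := by
    rcases hNnn.lt_or_eq with h | h
    · exact h
    · exfalso
      apply hne
      have h1' : (∑ i, Complex.normSq (z₀ i)) = 0 ∧ (∑ i, Complex.normSq (u₀ i)) = 0 := by
        constructor <;>
        · nlinarith [Finset.sum_nonneg (fun i (_ : i ∈ Finset.univ) => Complex.normSq_nonneg (z₀ i)),
            Finset.sum_nonneg (fun i (_ : i ∈ Finset.univ) => Complex.normSq_nonneg (u₀ i))]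
      have hz : z₀ = 0 := by
        funext i
        have := (Finset.sum_eq_zero_iff_of_nonneg
          (fun i _ => Complex.normSq_nonneg (z₀ i))).mp h1'.1 i (Finset.mem_univ i)
        exact Complex.normSq_eq_zero.mp this
      have hu : u₀ = 0 := by
        funext i
        have := (Finset.sum_eq_zero_iff_of_nonneg
          (fun i _ => Complex.normSq_nonneg (u₀ i))).mp h1'.2 i (Finset.mem_univ i)
        exact Complex.normSq_eq_zero.mp this
      simp [hz, hu]
  constructor
  · nlinarith
  · intro hc0
    rw [hc0, zero_mul] at key
    have hD0 : D = 0 := by nlinarith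
    have huz : u₀ = z₀ := by
      funext i
      have := (Finset.sum_eq_zero_iff_of_nonneg
        (fun i _ => Complex.normSq_nonneg (z₀ i - u₀ i))).mp hD0.symm.symm i (Finset.mem_univ i)
      have := Complex.normSq_eq_zero.mp this
      have := sub_eq_zero.mp this
      exact this.symm
    refine ⟨huz, ?_⟩
    have hcz : c • z₀ = 0 := by rw [← h1, huz]; simp
    have hz0 : z₀ ≠ 0 := by
      intro hz
      apply hne
      have : u₀ = 0 := by rw [huz, hz]
      simp [hz, this]
    have hc : c = 0 := by
      by_contra hcne
      apply hz0
      funext i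
      have := congrFun hcz i
      simp only [Pi.smul_apply, Pi.zero_apply, smul_eq_mul] at this
      rcases mul_eq_zero.mp this with h | h
      · exact absurd h hcne
      · exact h
    rw [hc] at h2
    simp only [zero_smul] at h2
    rw [huz] at h2
    have : -(M.map Complex.ofReal).mulVec u₀ = 0 := by
      rw [← h2]; rw [huz]; abel
    simpa using this
end
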